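/- Let A_0, …, A_m, X, Y be FDDS and suppose the coefficient type of A_i is nonempty for at least one i with 1 ≤ i ≤ m. Let P(·) denote the polynomial Σ_{i=0}^m A_i ·^i evaluated on FDDS. If the unroll U(P(X)) is isomorphic to the unroll U(P(Y)), then U(X) is isomorphic to U(Y). (All univariate polynomials over unrolls are injective.) -/

import Mathlib

/-- Isomorphism of finite dynamical systems: a bijection commuting with the maps. -/
def FddsIso {α β : Type} (f : α → α) (g : β → β) : Prop :=
  ∃ e : α ≃ β, ⇑e ∘ f = g ∘ ⇑e

/-- A state is periodic if some positive iterate fixes it. -/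
def IsPeriodicState {α : Type} (f : α → α) (x : α) : Prop :=
  ∃ n > 0, f^[n] x = x

/-- The vertex set of the unroll of `(α, f)`. -/
def UnrollSet {α : Type} (f : α → α) : Set (α × ℕ) :=
  {p | IsPeriodicState f (f^[p.2] p.1)}

/-- The parent map of the unroll. -/
def unrollMap {α : Type} (f : α → α) (q : UnrollSet f) : UnrollSet f :=
  if h : q.1.2 = 0 then q
  else ⟨(f q.1.1, q.1.2 - 1), by
    obtain ⟨⟨x, k⟩, hq⟩ := q
    simp only at h
    obtain ⟨k', rfl⟩ := Nat.exists_eq_succ_of_ne_zero h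
    simpa [UnrollSet, Function.iterate_succ_apply] using hq⟩

/-- Isomorphism of unrolls. -/
def UnrollIso {α β : Type} (f : α → α) (g : β → β) : Prop :=
  ∃ φ : UnrollSet f ≃ UnrollSet g, ⇑φ ∘ unrollMap f = unrollMap g ∘ ⇑φ

/-- Vertices of the cut at depth `n` of the unroll. -/
def CutSet {α : Type} (f : α → α) (n : ℕ) : Set (α × ℕ) :=
  {p | p ∈ UnrollSet f ∧ p.2 ≤ n}

/-- The parent map of the cut at depth `n`. -/
def cutMap {α : Type} (f : α → α) (n : ℕ) (q : CutSet f n) : CutSet f n :=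
  if h : q.1.2 = 0 then q
  else ⟨(f q.1.1, q.1.2 - 1), by
    obtain ⟨⟨x, k⟩, hq⟩ := q
    obtain ⟨hq1, hq2⟩ := hq
    simp only at h hq2 ⊢
    obtain ⟨k', rfl⟩ := Nat.exists_eq_succ_of_ne_zero h
    refine ⟨by simpa [UnrollSet, Function.iterate_succ_apply] using hq1, by omega⟩⟩

/-- Isomorphism of cuts at depth `n`. -/
def CutIso {α β : Type} (f : α → α) (g : β → β) (n : ℕ) : Prop :=
  ∃ φ : CutSet f n ≃ CutSet g n, ⇑φ ∘ cutMap f n = cutMap g n ∘ ⇑φ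

/-- The states of the components whose cycle length divides `p`. -/
def DivSet {α : Type} (f : α → α) (p : ℕ) : Set α :=
  {x | ∃ N, f^[N + p] x = f^[N] x}

/-- The restriction of `f` to `DivSet f p`. -/
def divMap {α : Type} (f : α → α) (p : ℕ) (q : DivSet f p) : DivSet f p :=
  ⟨f q.1, by
    obtain ⟨x, N, hN⟩ := q
    exact ⟨N, by
      rw [← Function.iterate_succ_apply, ← Function.iterate_succ_apply,
        Function.iterate_succ_apply', Function.iterate_succ_apply', hN]⟩⟩

/-- `k`-th power of an FDDS: map on `Fin k → α`. -/
def powMap {α : Type} (f : α → α) (k : ℕ) (v : Fin k → α) : Fin k → α := f ∘ v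

/-- Evaluation of the polynomial `Σ_{i=0}^m A_i X^i` at `(α, f)`. -/
def polyEval {m : ℕ} {γ : Fin (m + 1) → Type} (g : ∀ i, γ i → γ i)
    {α : Type} (f : α → α)
    (x : Σ i : Fin (m + 1), γ i × (Fin i.val → α)) :
    Σ i : Fin (m + 1), γ i × (Fin i.val → α) :=
  ⟨x.1, g x.1 x.2.1, f ∘ x.2.2⟩

/-- Evaluation of the constant-free polynomial `Σ_{i=1}^m A_i X^i` at `(α, f)`. -/
def polyEvalNC {m : ℕ} {γ : Fin m → Type} (g : ∀ i, γ i → γ i)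
    {α : Type} (f : α → α)
    (x : Σ i : Fin m, γ i × (Fin (i.val + 1) → α)) :
    Σ i : Fin m, γ i × (Fin (i.val + 1) → α) :=
  ⟨x.1, g x.1 x.2.1, f ∘ x.2.2⟩

/-- An FDDS is cancelable if it can be canceled from products. -/
def Cancelable {α : Type} (f : α → α) : Prop :=
  ∀ (β γ : Type) [Fintype β] [Fintype γ] (g : β → β) (h : γ → γ),
    FddsIso (Prod.map f g) (Prod.map f h) → FddsIso g h


-- ===== auxiliary development =====

attribute [local instance] Classical.propDecidable



inductive PTree : Type where
  | node : List PTree → PTree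

namespace PTree

def unit : PTree := node []

def merge : PTree → PTree → PTree
  | node a, node b => node (a ++ b)

lemma ind (P : PTree → Prop) (h : ∀ ts : List PTree, (∀ s ∈ ts, P s) → P (node ts)) :
    ∀ t, P t := by
  intro t
  induction t using PTree.rec (motive_2 := fun ts => ∀ s ∈ ts, P s) with
  | node ts ih => exact h ts ih
  | nil => rename_i s hs; cases hs
  | cons a l iha ihl =>
    rename_i s hs
    rcases List.mem_cons.1 hs with rfl | hs
    · exact iha
    · exact ihl s hs

end PTree

noncomputable def cnt {α : Type} [Fintype α] (f : α → α) : PTree → α → ℕ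
  | .node ts, x => (ts.attach.map (fun s => ∑ y : {y : α // f y = x}, cnt f s.1 y.1)).prod
decreasing_by
  have := List.sizeOf_lt_of_mem s.2
  simp only [PTree.node.sizeOf_spec]
  omega

variable {α : Type} [Fintype α] {f : α → α}

lemma cnt_node (ts : List PTree) (x : α) :
    cnt f (.node ts) x = (ts.map (fun s => ∑ y : {y : α // f y = x}, cnt f s y)).prod := by
  rw [cnt]
  congr 1
  rw [← List.attach_map_val (l := ts) (f := fun s => ∑ y : {y : α // f y = x}, cnt f s y)]

lemma cnt_unit (x : α) : cnt f PTree.unit x = 1 := by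
  simp [PTree.unit, cnt_node]

lemma cnt_merge (t s : PTree) (x : α) :
    cnt f (t.merge s) x = cnt f t x * cnt f s x := by
  cases t with | node a => cases s with | node b =>
  simp [PTree.merge, cnt_node]

lemma cnt_single (t : PTree) (x : α) :
    cnt f (.node [t]) x = ∑ y : {y : α // f y = x}, cnt f t y := by
  simp [cnt_node]

lemma cnt_node_equiv (ts : List PTree) (x : α)
    {ι : Type} [Fintype ι] (e : ι → {y : α // f y = x}) (he : Function.Bijective e) :
    cnt f (.node ts) x = (ts.map (fun s => ∑ p : ι, cnt f s (e p).1)).prod := by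
  rw [cnt_node]
  congr 1
  apply List.map_congr_left
  intro s _
  exact (Fintype.sum_bijective e he (fun p => cnt f s (e p).1) (fun y => cnt f s y.1)
    (fun _ => rfl)).symm

lemma cnt_single_equiv (t : PTree) (x : α)
    {ι : Type} [Fintype ι] (e : ι → {y : α // f y = x}) (he : Function.Bijective e) :
    cnt f (.node [t]) x = ∑ p : ι, cnt f t (e p).1 := by
  rw [cnt_node_equiv [t] x e he]
  simp


/-- Multiplicative character property. -/
def IsChar (w : PTree → ℕ) : Prop :=
  w PTree.unit = 1 ∧ ∀ t s, w (t.merge s) = w t * w s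

/-- Dedekind independence of distinct characters. -/
lemma char_indep : ∀ (n : ℕ) (S : Finset (PTree → ℕ)),
    (∀ w ∈ S, IsChar w) → ∀ (c : (PTree → ℕ) → ℤ),
    (∀ t, ∑ w ∈ S, c w * (w t : ℤ) = 0) →
    (S.filter (fun w => c w ≠ 0)).card ≤ n → ∀ w ∈ S, c w = 0 := by
  intro n
  induction n with
  | zero =>
    intro S hS c hrel hcard w hw
    by_contra hc
    have : w ∈ S.filter (fun w => c w ≠ 0) := Finset.mem_filter.2 ⟨hw, hc⟩
    have := Finset.card_pos.2 ⟨w, this⟩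
    omega
  | succ n ih =>
    intro S hS c hrel hcard w hw
    by_contra hc
    -- w is in the support
    have hwsupp : w ∈ S.filter (fun w => c w ≠ 0) := Finset.mem_filter.2 ⟨hw, hc⟩
    -- case on whether support has another element
    by_cases h2 : ∃ w' ∈ S.filter (fun w => c w ≠ 0), w' ≠ w
    · obtain ⟨w', hw'supp, hww'⟩ := h2
      obtain ⟨hw'S, hc'⟩ := Finset.mem_filter.1 hw'supp
      -- pick t0 where they differ
      obtain ⟨t0, ht0⟩ : ∃ t0, w' t0 ≠ w t0 := by
        by_contra hcontra
        push_neg at hcontra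
        exact hww' (funext hcontra)
      set d : (PTree → ℕ) → ℤ := fun u => c u * ((u t0 : ℤ) - (w' t0 : ℤ)) with hd
      have hrel' : ∀ t, ∑ u ∈ S, d u * (u t : ℤ) = 0 := by
        intro t
        have h1 := hrel (t0.merge t)
        have h2 := hrel t
        have e1 : ∀ u ∈ S, c u * (u (t0.merge t) : ℤ) = c u * (u t0 : ℤ) * (u t : ℤ) := by
          intro u hu
          rw [(hS u hu).2 t0 t]
          push_cast; ring
        rw [Finset.sum_congr rfl e1] at h1
        have : ∑ u ∈ S, d u * (u t : ℤ)
            = (∑ u ∈ S, c u * (u t0 : ℤ) * (u t : ℤ)) - (w' t0 : ℤ) * ∑ u ∈ S, c u * (u t : ℤ) := by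
          rw [Finset.mul_sum, ← Finset.sum_sub_distrib]
          apply Finset.sum_congr rfl
          intro u hu
          simp only [hd]; ring
        rw [this, h1, h2]; ring
      have hdcard : (S.filter (fun u => d u ≠ 0)).card ≤ n := by
        have hsub : S.filter (fun u => d u ≠ 0) ⊆ (S.filter (fun u => c u ≠ 0)).erase w' := by
          intro u hu
          obtain ⟨huS, hdu⟩ := Finset.mem_filter.1 hu
          refine Finset.mem_erase.2 ⟨?_, Finset.mem_filter.2 ⟨huS, ?_⟩⟩
          · rintro rfl
            simp [hd] at hdu
          · intro hcu; exact hdu (by simp [hd, hcu])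
        have := Finset.card_le_card hsub
        have := Finset.card_erase_of_mem hw'supp
        omega
      have hdw : d w = 0 := ih S hS d hrel' hdcard w hw
      have : (w t0 : ℤ) - (w' t0 : ℤ) ≠ 0 := by
        intro hcontra
        have h3 : (w' t0 : ℤ) = (w t0 : ℤ) := by linarith
        exact ht0 (Nat.cast_injective h3)
      rcases mul_eq_zero.1 hdw with h | h
      · exact hc h
      · exact this h
    · -- support is exactly {w}; evaluate at unit
      push_neg at h2
      have hsupp : S.filter (fun u => c u ≠ 0) = {w} := by
        apply Finset.eq_singleton_iff_unique_mem.2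
        exact ⟨hwsupp, fun u hu => h2 u hu⟩
      have h1 := hrel PTree.unit
      have : ∑ u ∈ S, c u * (u PTree.unit : ℤ) = c w := by
        rw [← Finset.sum_filter_ne_zero (f := fun u => c u * (u PTree.unit : ℤ))]
        have : S.filter (fun u => c u * (u PTree.unit : ℤ) ≠ 0) ⊆ S.filter (fun u => c u ≠ 0) := by
          intro u hu
          obtain ⟨huS, h⟩ := Finset.mem_filter.1 hu
          exact Finset.mem_filter.2 ⟨huS, fun hc => h (by simp [hc])⟩
        have heq : S.filter (fun u => c u * (u PTree.unit : ℤ) ≠ 0) = {w} ∨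
            S.filter (fun u => c u * (u PTree.unit : ℤ) ≠ 0) = ∅ := by
          rw [hsupp] at this
          rcases Finset.subset_singleton_iff.1 this with h | h
          · right; exact h
          · left; exact h
        rcases heq with h | h
        · rw [h, Finset.sum_singleton, (hS w hw).1]; ring
        · exfalso
          have : c w * (w PTree.unit : ℤ) ≠ 0 := by
            rw [(hS w hw).1]; simpa using hc
          have hmem : w ∈ S.filter (fun u => c u * (u PTree.unit : ℤ) ≠ 0) :=
            Finset.mem_filter.2 ⟨hw, this⟩
          rw [h] at hmem
          exact absurd hmem (Finset.notMem_empty w)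
      rw [this] at h1
      exact hc h1

lemma card_fiber_eq {X Y : Type} [Fintype X] [Fintype Y]
    (c : X → PTree → ℕ) (d : Y → PTree → ℕ)
    (hc : ∀ x, IsChar (c x)) (hd : ∀ y, IsChar (d y))
    (hsum : ∀ t, ∑ x, c x t = ∑ y, d y t) (w : PTree → ℕ) :
    Fintype.card {x // c x = w} = Fintype.card {y // d y = w} := by
  classical
  set S : Finset (PTree → ℕ) := (Finset.univ.image c) ∪ (Finset.univ.image d) with hS
  have hSchar : ∀ u ∈ S, IsChar u := by
    intro u hu
    rcases Finset.mem_union.1 hu with h | h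
    · obtain ⟨x, -, rfl⟩ := Finset.mem_image.1 h; exact hc x
    · obtain ⟨y, -, rfl⟩ := Finset.mem_image.1 h; exact hd y
  set coef : (PTree → ℕ) → ℤ := fun u =>
    (Fintype.card {x // c x = u} : ℤ) - (Fintype.card {y // d y = u} : ℤ) with hcoef
  have key : ∀ (Z : Type) [Fintype Z] (e : Z → PTree → ℕ), (∀ z, e z ∈ S) →
      ∀ t, ∑ u ∈ S, (Fintype.card {z // e z = u} : ℤ) * (u t : ℤ) = ∑ z, (e z t : ℤ) := by
    intro Z _ e he t
    rw [← Finset.sum_fiberwise_of_maps_to (fun z _ => he z) (fun z => (e z t : ℤ))]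
    apply Finset.sum_congr rfl
    intro u hu
    rw [Finset.sum_congr rfl (fun z hz => by
      rw [(Finset.mem_filter.1 hz).2])]
    rw [Finset.sum_const, Fintype.card_subtype]
    simp [nsmul_eq_mul]
  have hrel : ∀ t, ∑ u ∈ S, coef u * (u t : ℤ) = 0 := by
    intro t
    have h1 := key X c (fun x => Finset.mem_union_left _ (Finset.mem_image_of_mem c (Finset.mem_univ x))) t
    have h2 := key Y d (fun y => Finset.mem_union_right _ (Finset.mem_image_of_mem d (Finset.mem_univ y))) t
    have : ∑ u ∈ S, coef u * (u t : ℤ)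
        = (∑ u ∈ S, (Fintype.card {x // c x = u} : ℤ) * (u t : ℤ))
          - ∑ u ∈ S, (Fintype.card {y // d y = u} : ℤ) * (u t : ℤ) := by
      rw [← Finset.sum_sub_distrib]
      apply Finset.sum_congr rfl; intro u hu; simp [hcoef]; ring
    rw [this, h1, h2]
    have h3 : (∑ x, ((c x t : ℕ) : ℤ)) = ∑ y, ((d y t : ℕ) : ℤ) := by exact_mod_cast hsum t
    rw [h3, sub_self]
  by_cases hw : w ∈ S
  · have := char_indep S.card S hSchar coef hrel (Finset.card_filter_le _ _) w hw
    have : (Fintype.card {x // c x = w} : ℤ) = (Fintype.card {y // d y = w} : ℤ) := by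
      simp [hcoef] at this; linarith
    exact_mod_cast this
  · have h1 : Fintype.card {x // c x = w} = 0 := by
      rw [Fintype.card_eq_zero_iff]
      constructor; rintro ⟨x, rfl⟩
      exact hw (Finset.mem_union_left _ (Finset.mem_image_of_mem c (Finset.mem_univ x)))
    have h2 : Fintype.card {y // d y = w} = 0 := by
      rw [Fintype.card_eq_zero_iff]
      constructor; rintro ⟨y, rfl⟩
      exact hw (Finset.mem_union_right _ (Finset.mem_image_of_mem d (Finset.mem_univ y)))
    rw [h1, h2]

lemma exists_matching {X Y : Type} [Fintype X] [Fintype Y]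
    (c : X → PTree → ℕ) (d : Y → PTree → ℕ)
    (hc : ∀ x, IsChar (c x)) (hd : ∀ y, IsChar (d y))
    (hsum : ∀ t, ∑ x, c x t = ∑ y, d y t) :
    ∃ e : X ≃ Y, ∀ x, d (e x) = c x := by
  classical
  have hW : ∀ w, Nonempty ({x // c x = w} ≃ {y // d y = w}) := fun w =>
    ⟨Fintype.equivOfCardEq (card_fiber_eq c d hc hd hsum w)⟩
  set ew : ∀ w, {x // c x = w} ≃ {y // d y = w} := fun w => (hW w).some with hew
  refine ⟨(Equiv.sigmaFiberEquiv c).symm.trans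
    ((Equiv.sigmaCongrRight ew).trans (Equiv.sigmaFiberEquiv d)), ?_⟩
  intro x
  have : (Equiv.sigmaFiberEquiv c).symm x = ⟨c x, x, rfl⟩ := rfl
  simp only [Equiv.trans_apply, this, Equiv.sigmaCongrRight_apply, Equiv.sigmaFiberEquiv]
  exact (ew (c x) ⟨x, rfl⟩).2


section Periodic

variable {δ : Type} {u : δ → δ}

lemma iter_fix_of_dvd {n N : ℕ} {x : δ} (h : u^[n] x = x) (hd : n ∣ N) : u^[N] x = x := by
  obtain ⟨k, rfl⟩ := hd
  induction k with
  | zero => rfl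
  | succ k ih =>
    rw [Nat.mul_succ, Function.iterate_add_apply, h, ih]

lemma isPeriodic_iterate {x : δ} (h : IsPeriodicState u x) (k : ℕ) :
    IsPeriodicState u (u^[k] x) := by
  obtain ⟨n, hn, hx⟩ := h
  exact ⟨n, hn, by rw [← Function.iterate_add_apply, Nat.add_comm, Function.iterate_add_apply, hx]⟩

lemma isPeriodic_apply {x : δ} (h : IsPeriodicState u x) : IsPeriodicState u (u x) := by
  simpa using isPeriodic_iterate h 1

lemma exists_periodic_preimage {x : δ} (h : IsPeriodicState u x) :
    ∃ y, u y = x ∧ IsPeriodicState u y := by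
  obtain ⟨n, hn, hx⟩ := h
  refine ⟨u^[n-1] x, ?_, isPeriodic_iterate ⟨n, hn, hx⟩ (n-1)⟩
  rw [← Function.iterate_succ_apply' u (n-1) x]
  have : (n - 1).succ = n := by omega
  rw [this, hx]

lemma exists_periodic_state [Finite δ] (h : Nonempty δ) : ∃ p, IsPeriodicState u p := by
  obtain ⟨x⟩ := h
  obtain ⟨a, b, hab, he⟩ := Finite.exists_ne_map_eq_of_infinite (fun n : ℕ => u^[n] x)
  rcases Nat.lt_or_ge a b with hlt | hge
  · refine ⟨u^[a] x, b - a, by omega, ?_⟩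
    rw [← Function.iterate_add_apply]
    have : b - a + a = b := by omega
    rw [this, he]
  · have hlt : b < a := by omega
    refine ⟨u^[b] x, a - b, by omega, ?_⟩
    rw [← Function.iterate_add_apply]
    have : a - b + b = a := by omega
    rw [this, ← he]

end Periodic

variable {α : Type} [Fintype α] {f : α → α}

lemma cnt_pos (t : PTree) : ∀ x : α, IsPeriodicState f x → 0 < cnt f t x := by
  induction t using PTree.ind with
  | _ ts ih =>
    intro x hx
    rw [cnt_node]
    apply List.prod_pos
    intro a ha
    obtain ⟨s, hs, rfl⟩ := List.mem_map.1 ha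
    obtain ⟨y, hy, hyper⟩ := exists_periodic_preimage hx
    have h1 : cnt f s y ≤ ∑ z : {y : α // f y = x}, cnt f s z.1 :=
      Finset.single_le_sum (f := fun z : {y : α // f y = x} => cnt f s z.1)
        (fun i _ => Nat.zero_le _) (Finset.mem_univ ⟨y, hy⟩)
    exact lt_of_lt_of_le (ih s hs y hyper) h1

/-- Number of tree homomorphisms from pattern `t` into the unroll of `f`. -/
noncomputable def hCount (f : α → α) (t : PTree) : ℕ :=
  ∑ p : {x : α // IsPeriodicState f x}, cnt f t p.1

lemma hCount_pos (h : Nonempty α) (t : PTree) : 0 < hCount f t := by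
  obtain ⟨p, hp⟩ := exists_periodic_state (u := f) h
  have h1 : cnt f t p ≤ ∑ z : {x : α // IsPeriodicState f x}, cnt f t z.1 :=
    Finset.single_le_sum (f := fun z : {x : α // IsPeriodicState f x} => cnt f t z.1)
      (fun i _ => Nat.zero_le _) (Finset.mem_univ ⟨p, hp⟩)
  exact lt_of_lt_of_le (cnt_pos t p hp) h1

lemma hCount_equiv (t : PTree)
    {ι : Type} [Fintype ι] (e : ι → {x : α // IsPeriodicState f x}) (he : Function.Bijective e) :
    hCount f t = ∑ p : ι, cnt f t (e p).1 := by
  rw [hCount]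
  exact (Fintype.sum_bijective e he (fun p => cnt f t (e p).1) (fun y => cnt f t y.1)
    (fun _ => rfl)).symm

section Pillar1

variable {α₂ : Type} [Fintype α₂] {f₂ : α₂ → α₂}

lemma unroll_mem_iff (p : α × ℕ) : p ∈ UnrollSet f ↔ IsPeriodicState f (f^[p.2] p.1) := Iff.rfl

lemma per_of_root {q : UnrollSet f} (h : q.1.2 = 0) : IsPeriodicState f q.1.1 := by
  have hq := q.2
  rw [unroll_mem_iff, h] at hq
  simpa using hq

lemma unrollMap_fixed_iff (q : UnrollSet f) : unrollMap f q = q ↔ q.1.2 = 0 := by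
  constructor
  · intro h
    by_contra hne
    rw [unrollMap, dif_neg hne] at h
    have := congrArg (fun r : UnrollSet f => r.1.2) h
    simp only at this
    omega
  · intro h
    rw [unrollMap, dif_pos h]

def childNode (q : UnrollSet f) (y : {y : α // f y = q.1.1}) : UnrollSet f :=
  ⟨(y.1, q.1.2 + 1), by
    rw [unroll_mem_iff]
    simp only [Function.iterate_succ_apply, y.2]
    exact q.2⟩

lemma childNode_map (q : UnrollSet f) (y : {y : α // f y = q.1.1}) :
    unrollMap f (childNode q y) = q := by
  rw [unrollMap, dif_neg (by simp [childNode])]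
  apply Subtype.ext
  simp [childNode, y.2]

lemma childNode_ne (q : UnrollSet f) (y : {y : α // f y = q.1.1}) :
    childNode q y ≠ q := by
  intro h
  have := congrArg (fun r : UnrollSet f => r.1.2) h
  simp [childNode] at this

/-- The children of an unroll node correspond to the fiber of `f` over its state. -/
noncomputable def childEquiv (q : UnrollSet f) :
    {y : α // f y = q.1.1} ≃ {q' : UnrollSet f // unrollMap f q' = q ∧ q' ≠ q} where
  toFun y := ⟨childNode q y, childNode_map q y, childNode_ne q y⟩
  invFun q' := ⟨q'.1.1.1, by
    obtain ⟨q'', hmap, hne⟩ := q'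
    have hk : q''.1.2 ≠ 0 := by
      intro h0
      exact hne (by rw [← hmap, unrollMap, dif_pos h0])
    rw [unrollMap, dif_neg hk] at hmap
    have h1 := congrArg Subtype.val hmap
    simpa using congrArg Prod.fst h1⟩
  left_inv y := Subtype.ext rfl
  right_inv := by
    rintro ⟨q'', hmap, hne⟩
    have hk : q''.1.2 ≠ 0 := by
      intro h0
      exact hne (by rw [← hmap, unrollMap, dif_pos h0])
    apply Subtype.ext
    apply Subtype.ext
    rw [unrollMap, dif_neg hk] at hmap
    have h1 := congrArg Subtype.val hmap
    have hb := congrArg Prod.snd h1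
    simp only at hb
    show (q''.1.1, q.1.2 + 1) = q''.1
    have : q.1.2 + 1 = q''.1.2 := by omega
    rw [this]

lemma cnt_of_unrollIso (φ : UnrollSet f ≃ UnrollSet f₂)
    (hφ : ⇑φ ∘ unrollMap f = unrollMap f₂ ∘ ⇑φ) (t : PTree) :
    ∀ q : UnrollSet f, cnt f₂ t (φ q).1.1 = cnt f t q.1.1 := by
  induction t using PTree.ind with
  | _ ts ih =>
    intro q
    rw [cnt_node, cnt_node]
    congr 1
    apply List.map_congr_left
    intro s hs
    have hiff : ∀ q' : UnrollSet f,
        (unrollMap f q' = q ∧ q' ≠ q) ↔ (unrollMap f₂ (φ q') = φ q ∧ φ q' ≠ φ q) := by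
      intro q'
      have hc : unrollMap f₂ (φ q') = φ (unrollMap f q') := (congrFun hφ q').symm
      constructor
      · rintro ⟨h1, h2⟩
        exact ⟨by rw [hc, h1], fun h => h2 (φ.injective h)⟩
      · rintro ⟨h1, h2⟩
        rw [hc] at h1
        exact ⟨φ.injective h1, fun h => h2 (congrArg φ h)⟩
    set E := (childEquiv q).trans ((Equiv.subtypeEquiv φ hiff).trans (childEquiv (φ q)).symm)
      with hE
    rw [← Equiv.sum_comp E (fun y₂ : {y₂ : α₂ // f₂ y₂ = (φ q).1.1} => cnt f₂ s y₂.1)]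
    apply Finset.sum_congr rfl
    intro y _
    have hval : (E y).1 = (φ (childNode q y)).1.1 := rfl
    show cnt f₂ s (E y).1 = cnt f s y.1
    rw [hval, ih s hs (childNode q y)]
    rfl

lemma phi_snd_zero (φ : UnrollSet f ≃ UnrollSet f₂)
    (hφ : ⇑φ ∘ unrollMap f = unrollMap f₂ ∘ ⇑φ) (q : UnrollSet f) (h : q.1.2 = 0) :
    (φ q).1.2 = 0 := by
  apply (unrollMap_fixed_iff (φ q)).1
  have : unrollMap f₂ (φ q) = φ (unrollMap f q) := (congrFun hφ q).symm
  rw [this, (unrollMap_fixed_iff q).2 h]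

def rootNode (p : {x : α // IsPeriodicState f x}) : UnrollSet f :=
  ⟨(p.1, 0), by rw [unroll_mem_iff]; simpa using p.2⟩

lemma comm_symm (φ : UnrollSet f ≃ UnrollSet f₂)
    (hφ : ⇑φ ∘ unrollMap f = unrollMap f₂ ∘ ⇑φ) :
    ⇑φ.symm ∘ unrollMap f₂ = unrollMap f ∘ ⇑φ.symm := by
  funext q₂
  apply φ.injective
  show φ (φ.symm (unrollMap f₂ q₂)) = φ (unrollMap f (φ.symm q₂))
  rw [Equiv.apply_symm_apply]
  have h2 := congrFun hφ (φ.symm q₂)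
  simp only [Function.comp_apply] at h2
  rw [h2, Equiv.apply_symm_apply]

noncomputable def rootPerEquiv (φ : UnrollSet f ≃ UnrollSet f₂)
    (hφ : ⇑φ ∘ unrollMap f = unrollMap f₂ ∘ ⇑φ) :
    {x : α // IsPeriodicState f x} ≃ {x₂ : α₂ // IsPeriodicState f₂ x₂} where
  toFun p := ⟨(φ (rootNode p)).1.1, per_of_root (phi_snd_zero φ hφ (rootNode p) rfl)⟩
  invFun p₂ := ⟨(φ.symm (rootNode p₂)).1.1,
    per_of_root (phi_snd_zero φ.symm (comm_symm φ hφ) (rootNode p₂) rfl)⟩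
  left_inv := by
    intro p
    apply Subtype.ext
    have h1 : rootNode (⟨(φ (rootNode p)).1.1,
        per_of_root (phi_snd_zero φ hφ (rootNode p) rfl)⟩ : {x₂ : α₂ // IsPeriodicState f₂ x₂})
        = φ (rootNode p) := by
      apply Subtype.ext
      show ((φ (rootNode p)).1.1, 0) = (φ (rootNode p)).1
      rw [← (phi_snd_zero φ hφ (rootNode p) rfl)]
    show (φ.symm (rootNode _)).1.1 = p.1
    rw [h1, Equiv.symm_apply_apply]
    rfl
  right_inv := by
    intro p₂
    apply Subtype.ext
    have h1 : rootNode (⟨(φ.symm (rootNode p₂)).1.1,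
        per_of_root (phi_snd_zero φ.symm (comm_symm φ hφ) (rootNode p₂) rfl)⟩ :
          {x : α // IsPeriodicState f x})
        = φ.symm (rootNode p₂) := by
      apply Subtype.ext
      show ((φ.symm (rootNode p₂)).1.1, 0) = (φ.symm (rootNode p₂)).1
      rw [← (phi_snd_zero φ.symm (comm_symm φ hφ) (rootNode p₂) rfl)]
    show (φ (rootNode _)).1.1 = p₂.1
    rw [h1, Equiv.apply_symm_apply]
    rfl

lemma hCount_eq_of_unrollIso (h : UnrollIso f f₂) (t : PTree) :
    hCount f t = hCount f₂ t := by
  obtain ⟨φ, hφ⟩ := h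
  rw [hCount, hCount]
  apply Fintype.sum_equiv (rootPerEquiv φ hφ)
  intro p
  exact (cnt_of_unrollIso φ hφ t (rootNode p)).symm

end Pillar1

section Poly

variable {m : ℕ} {γ : Fin (m + 1) → Type} [∀ i, Fintype (γ i)] {g : ∀ i, γ i → γ i}

lemma polyEval_iterate (n : ℕ) :
    ∀ w : Σ i : Fin (m + 1), γ i × (Fin i.val → α),
      (polyEval g f)^[n] w = ⟨w.1, ((g w.1)^[n] w.2.1, f^[n] ∘ w.2.2)⟩ := by
  induction n with
  | zero => intro w; rfl
  | succ n ih =>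
    intro w
    rw [Function.iterate_succ_apply, ih (polyEval g f w)]
    rfl

lemma isPeriodic_polyEval_iff (w : Σ i : Fin (m + 1), γ i × (Fin i.val → α)) :
    IsPeriodicState (polyEval g f) w ↔
      IsPeriodicState (g w.1) w.2.1 ∧ ∀ j, IsPeriodicState f (w.2.2 j) := by
  obtain ⟨i, c, v⟩ := w
  constructor
  · rintro ⟨n, hn, he⟩
    rw [polyEval_iterate] at he
    simp only [Sigma.mk.inj_iff, heq_eq_eq, Prod.mk.injEq, true_and] at he
    exact ⟨⟨n, hn, he.1⟩, fun j => ⟨n, hn, congrFun he.2 j⟩⟩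
  · rintro ⟨⟨n, hn, hc⟩, hv⟩
    choose nj hnj hvj using hv
    refine ⟨n * ∏ j, nj j, Nat.mul_pos hn (Finset.prod_pos fun j _ => hnj j), ?_⟩
    rw [polyEval_iterate]
    show (⟨i, (_, _)⟩ : Σ i : Fin (m + 1), γ i × (Fin i.val → α)) = ⟨i, (c, v)⟩
    apply congrArg (Sigma.mk i)
    refine Prod.ext ?_ ?_
    · exact iter_fix_of_dvd hc (Dvd.intro _ rfl)
    · funext j
      exact iter_fix_of_dvd (hvj j)
        (dvd_mul_of_dvd_right (Finset.dvd_prod_of_mem _ (Finset.mem_univ j)) n)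

noncomputable def polyFiberEquiv (i : Fin (m + 1)) (c : γ i) (v : Fin i.val → α) :
    ({c' : γ i // g i c' = c} × ∀ j : Fin i.val, {y : α // f y = v j}) ≃
      {w : Σ i : Fin (m + 1), γ i × (Fin i.val → α) // polyEval g f w = ⟨i, (c, v)⟩} := by
  apply Equiv.ofBijective (fun p => ⟨⟨i, (p.1.1, fun j => (p.2 j).1)⟩, by
    show (⟨i, (g i p.1.1, f ∘ fun j => (p.2 j).1)⟩ :
        Σ i : Fin (m + 1), γ i × (Fin i.val → α)) = ⟨i, (c, v)⟩
    apply congrArg (Sigma.mk i)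
    refine Prod.ext p.1.2 (funext fun j => (p.2 j).2)⟩)
  constructor
  · intro p p' h
    have h1 := congrArg Subtype.val h
    simp only [Sigma.mk.inj_iff, heq_eq_eq, Prod.mk.injEq, true_and] at h1
    refine Prod.ext (Subtype.ext h1.1) (funext fun j => Subtype.ext ?_)
    exact congrFun h1.2 j
  · rintro ⟨⟨i₁, c₁, v₁⟩, hw⟩
    have hfst : i₁ = i := congrArg Sigma.fst hw
    subst hfst
    simp only [polyEval, Sigma.mk.inj_iff, heq_eq_eq, Prod.mk.injEq, true_and] at hw
    exact ⟨⟨⟨c₁, hw.1⟩, fun j => ⟨v₁ j, congrFun hw.2 j⟩⟩, Subtype.ext rfl⟩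

lemma list_prod_mul_pi {k : ℕ} (ts : List PTree) (X : PTree → ℕ) (Y : PTree → Fin k → ℕ) :
    (ts.map fun s => X s * ∏ j, Y s j).prod
      = (ts.map X).prod * ∏ j, (ts.map fun s => Y s j).prod := by
  induction ts with
  | nil => simp
  | cons a l ih =>
    simp only [List.map_cons, List.prod_cons, ih, Finset.prod_mul_distrib]
    ring

lemma cnt_polyEval (t : PTree) : ∀ (i : Fin (m + 1)) (c : γ i) (v : Fin i.val → α),
    cnt (polyEval g f) t ⟨i, (c, v)⟩ = cnt (g i) t c * ∏ j, cnt f t (v j) := by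
  induction t using PTree.ind with
  | _ ts ih =>
    intro i c v
    rw [cnt_node_equiv ts (⟨i, (c, v)⟩ : Σ i : Fin (m + 1), γ i × (Fin i.val → α))
      (polyFiberEquiv i c v) (Equiv.bijective _)]
    have key : ∀ s ∈ ts,
        (∑ p : ({c' : γ i // g i c' = c} × ∀ j : Fin i.val, {y : α // f y = v j}),
          cnt (polyEval g f) s ((polyFiberEquiv i c v) p).1)
        = (∑ c' : {c' : γ i // g i c' = c}, cnt (g i) s c'.1)
            * ∏ j, ∑ y : {y : α // f y = v j}, cnt f s y.1 := by
      intro s hs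
      have hpt : ∀ p : ({c' : γ i // g i c' = c} × ∀ j : Fin i.val, {y : α // f y = v j}),
          cnt (polyEval g f) s ((polyFiberEquiv i c v) p).1
            = cnt (g i) s p.1.1 * ∏ j, cnt f s ((p.2 j).1) := by
        intro p
        have hval : ((polyFiberEquiv i c v) p).1 = ⟨i, (p.1.1, fun j => (p.2 j).1)⟩ := rfl
        rw [hval, ih s hs]
      rw [Finset.sum_congr rfl (fun p _ => hpt p), Fintype.sum_prod_type]
      rw [← Fintype.sum_mul_sum (fun c' : {c' : γ i // g i c' = c} => cnt (g i) s c'.1)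
        (fun b : (∀ j : Fin i.val, {y : α // f y = v j}) => ∏ j, cnt f s ((b j).1))]
      congr 1
      exact (Fintype.prod_sum (fun j (y : {y : α // f y = v j}) => cnt f s y.1)).symm
    have hmap := List.map_congr_left key
    rw [hmap, list_prod_mul_pi, ← cnt_node]
    congr 1
    exact Finset.prod_congr rfl (fun j _ => (cnt_node ts (v j)).symm)

noncomputable def perPolyEquiv :
    (Σ i : Fin (m + 1), {c : γ i // IsPeriodicState (g i) c}
        × (Fin i.val → {x : α // IsPeriodicState f x})) ≃
      {w : Σ i : Fin (m + 1), γ i × (Fin i.val → α) //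
        IsPeriodicState (polyEval g f) w} := by
  apply Equiv.ofBijective (fun p => ⟨⟨p.1, (p.2.1.1, fun j => (p.2.2 j).1)⟩,
    (isPeriodic_polyEval_iff _).2 ⟨p.2.1.2, fun j => (p.2.2 j).2⟩⟩)
  constructor
  · rintro ⟨i, cp, vp⟩ ⟨i', cp', vp'⟩ h
    have h1 := congrArg Subtype.val h
    have hfst : i = i' := congrArg Sigma.fst h1
    subst hfst
    simp only [Sigma.mk.inj_iff, heq_eq_eq, Prod.mk.injEq, true_and] at h1
    apply congrArg (Sigma.mk i)
    refine Prod.ext (Subtype.ext h1.1) (funext fun j => Subtype.ext (congrFun h1.2 j))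
  · rintro ⟨⟨i, c, v⟩, hper⟩
    rw [isPeriodic_polyEval_iff] at hper
    exact ⟨⟨i, ⟨c, hper.1⟩, fun j => ⟨v j, hper.2 j⟩⟩, Subtype.ext rfl⟩

lemma hCount_polyEval (t : PTree) :
    hCount (polyEval g f) t = ∑ i : Fin (m + 1), hCount (g i) t * (hCount f t) ^ (i.val) := by
  rw [hCount, ← Equiv.sum_comp (perPolyEquiv (f := f) (g := g))
    (fun w : {w : Σ i : Fin (m + 1), γ i × (Fin i.val → α) //
        IsPeriodicState (polyEval g f) w} => cnt (polyEval g f) t w.1)]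
  rw [← Finset.univ_sigma_univ, Finset.sum_sigma]
  apply Finset.sum_congr rfl
  intro i _
  have hpt : ∀ p : ({c : γ i // IsPeriodicState (g i) c}
      × (Fin i.val → {x : α // IsPeriodicState f x})),
      cnt (polyEval g f) t (perPolyEquiv ⟨i, p⟩).1
        = cnt (g i) t p.1.1 * ∏ j, cnt f t ((p.2 j).1) := by
    intro p
    have hval : (perPolyEquiv (f := f) (g := g) ⟨i, p⟩).1
        = ⟨i, (p.1.1, fun j => (p.2 j).1)⟩ := rfl
    rw [hval, cnt_polyEval]
  rw [Finset.sum_congr rfl (fun p _ => hpt p), Fintype.sum_prod_type]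
  rw [← Fintype.sum_mul_sum (fun c : {c : γ i // IsPeriodicState (g i) c} => cnt (g i) t c.1)
    (fun b : (Fin i.val → {x : α // IsPeriodicState f x}) => ∏ j, cnt f t ((b j).1))]
  rw [hCount]
  congr 1
  rw [← Fintype.prod_sum (fun (j : Fin i.val) (y : {x : α // IsPeriodicState f x}) => cnt f t y.1)]
  rw [Finset.prod_const]
  simp [hCount]

lemma nat_poly_inj {n : ℕ} (a : Fin n → ℕ) (i0 : Fin n) (h0 : 0 < a i0) (hi0 : i0.val ≠ 0)
    {z z' : ℕ} (h : ∑ i, a i * z ^ i.val = ∑ i, a i * z' ^ i.val) : z = z' := by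
  rcases lt_trichotomy z z' with hlt | heq | hlt
  · exfalso
    exact ne_of_lt (Finset.sum_lt_sum
      (fun i _ => Nat.mul_le_mul_left _ (Nat.pow_le_pow_left hlt.le _))
      ⟨i0, Finset.mem_univ _,
        mul_lt_mul_of_pos_left (Nat.pow_lt_pow_left hlt hi0) h0⟩) h
  · exact heq
  · exfalso
    exact ne_of_lt (Finset.sum_lt_sum
      (fun i _ => Nat.mul_le_mul_left _ (Nat.pow_le_pow_left hlt.le _))
      ⟨i0, Finset.mem_univ _,
        mul_lt_mul_of_pos_left (Nat.pow_lt_pow_left hlt hi0) h0⟩) h.symm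

end Poly

section Pillar2

lemma isChar_cnt (a : α) : IsChar (fun t => cnt f t a) :=
  ⟨cnt_unit a, fun t s => cnt_merge t s a⟩

variable {α₂ : Type} [Fintype α₂] {f₂ : α₂ → α₂}

lemma exists_fiberEquiv (a : α) (b : α₂) (hab : ∀ t, cnt f t a = cnt f₂ t b) :
    ∃ e : {x : α // f x = a} ≃ {y : α₂ // f₂ y = b},
      ∀ z t, cnt f₂ t (e z).1 = cnt f t z.1 := by
  have hsum : ∀ t, ∑ z : {x : α // f x = a}, cnt f t z.1
      = ∑ y : {y : α₂ // f₂ y = b}, cnt f₂ t y.1 := by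
    intro t
    have h1 := hab (PTree.node [t])
    rw [cnt_single, cnt_single] at h1
    exact h1
  obtain ⟨e, he⟩ := exists_matching
    (fun z : {x : α // f x = a} => fun t => cnt f t z.1)
    (fun y : {y : α₂ // f₂ y = b} => fun t => cnt f₂ t y.1)
    (fun z => isChar_cnt z.1) (fun y => isChar_cnt y.1) hsum
  exact ⟨e, fun z t => congrFun (he z) t⟩

/-- A chosen fiber bijection preserving the counting invariants. -/
noncomputable def fiberE (a : α) (b : α₂) (hab : ∀ t, cnt f t a = cnt f₂ t b) :
    {e : {x : α // f x = a} ≃ {y : α₂ // f₂ y = b} //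
      ∀ z t, cnt f₂ t (e z).1 = cnt f t z.1} :=
  ⟨(exists_fiberEquiv a b hab).choose, (exists_fiberEquiv a b hab).choose_spec⟩

/-- Decomposition of level `k+1` of the unroll into level `k` and fibers. -/
def decompIter (k : ℕ) : {x : α // IsPeriodicState f (f^[k+1] x)} ≃
    Σ p : {x : α // IsPeriodicState f (f^[k] x)}, {z : α // f z = p.1} where
  toFun x := ⟨⟨f x.1, x.2⟩, ⟨x.1, rfl⟩⟩
  invFun pz := ⟨pz.2.1, by
    have h := pz.1.2
    rw [← pz.2.2] at h
    exact h⟩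
  left_inv x := Subtype.ext rfl
  right_inv := by
    rintro ⟨⟨p, hp⟩, z, hz⟩
    have hz' : f z = p := hz
    cases hz'
    rfl

/-- The level-`k` matchings of the unrolls, constructed recursively. -/
noncomputable def levelE (σ : {x : α // IsPeriodicState f x} ≃ {y : α₂ // IsPeriodicState f₂ y})
    (hσ : ∀ p t, cnt f₂ t (σ p).1 = cnt f t p.1) :
    ∀ k : ℕ, {e : {x : α // IsPeriodicState f (f^[k] x)} ≃
        {y : α₂ // IsPeriodicState f₂ (f₂^[k] y)} //
      ∀ x t, cnt f₂ t (e x).1 = cnt f t x.1}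
  | 0 => ⟨σ, hσ⟩
  | (k+1) =>
    let E := levelE σ hσ k
    ⟨(decompIter k).trans ((Equiv.sigmaCongr E.1
        (fun p => (fiberE p.1 (E.1 p).1 (fun t => (E.2 p t).symm)).1)).trans
        (decompIter k).symm), by
      intro x t
      exact (fiberE (f x.1) (E.1 ⟨f x.1, x.2⟩).1
        (fun t => (E.2 ⟨f x.1, x.2⟩ t).symm)).2 ⟨x.1, rfl⟩ t⟩

lemma levelE_coh (σ : {x : α // IsPeriodicState f x} ≃ {y : α₂ // IsPeriodicState f₂ y})
    (hσ : ∀ p t, cnt f₂ t (σ p).1 = cnt f t p.1) (k : ℕ)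
    (x : {x : α // IsPeriodicState f (f^[k+1] x)}) :
    f₂ (((levelE σ hσ (k+1)).1 x).1) = ((levelE σ hσ k).1 ⟨f x.1, x.2⟩).1 := by
  exact ((fiberE (f x.1) ((levelE σ hσ k).1 ⟨f x.1, x.2⟩).1
    (fun t => ((levelE σ hσ k).2 ⟨f x.1, x.2⟩ t).symm)).1 ⟨x.1, rfl⟩).2

/-- The unroll as a sigma type over depths. -/
def unrollSigmaEquiv : UnrollSet f ≃ Σ k : ℕ, {x : α // IsPeriodicState f (f^[k] x)} where
  toFun q := ⟨q.1.2, ⟨q.1.1, q.2⟩⟩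
  invFun s := ⟨(s.2.1, s.1), s.2.2⟩
  left_inv q := Subtype.ext rfl
  right_inv s := rfl

lemma unrollIso_of_hCount (h : ∀ t, hCount f t = hCount f₂ t) : UnrollIso f f₂ := by
  obtain ⟨σ, hσ0⟩ := exists_matching
    (fun p : {x : α // IsPeriodicState f x} => fun t => cnt f t p.1)
    (fun q : {y : α₂ // IsPeriodicState f₂ y} => fun t => cnt f₂ t q.1)
    (fun p => isChar_cnt p.1) (fun q => isChar_cnt q.1) (fun t => h t)
  have hσ : ∀ p t, cnt f₂ t (σ p).1 = cnt f t p.1 := fun p t => congrFun (hσ0 p) t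
  set Φ := unrollSigmaEquiv.trans ((Equiv.sigmaCongrRight (fun k => (levelE σ hσ k).1)).trans
    unrollSigmaEquiv.symm) with hΦ
  refine ⟨Φ, ?_⟩
  funext q
  obtain ⟨⟨x, k⟩, hq⟩ := q
  rw [Function.comp_apply, Function.comp_apply]
  cases k with
  | zero =>
    rw [(unrollMap_fixed_iff _).2 rfl]
    exact ((unrollMap_fixed_iff _).2 rfl).symm
  | succ k =>
    have hL : unrollMap f ⟨(x, k+1), hq⟩ = ⟨(f x, k), hq⟩ := by
      rw [unrollMap, dif_neg (Nat.succ_ne_zero k)]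
      exact Subtype.ext rfl
    rw [hL]
    apply Subtype.ext
    have hcond : ¬ ((Φ ⟨(x, k+1), hq⟩).1.2 = 0) := Nat.succ_ne_zero k
    rw [unrollMap, dif_neg hcond]
    show (((levelE σ hσ k).1 ⟨f x, hq⟩).1, k)
      = (f₂ (((levelE σ hσ (k+1)).1 ⟨x, hq⟩).1), k + 1 - 1)
    refine Prod.ext ?_ rfl
    exact (levelE_coh σ hσ k ⟨x, hq⟩).symm

end Pillar2


/-- All univariate polynomials over unrolls are injective: if some
non-constant coefficient `A_i` (with `1 ≤ i ≤ m`) has a nonempty state set and the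
unrolls of `P(X)` and `P(Y)` are isomorphic, then the unrolls of `X` and `Y` are
isomorphic. -/
theorem unroll_poly_injective {m : ℕ} {γ : Fin (m + 1) → Type} [∀ i, Fintype (γ i)]
    (g : ∀ i, γ i → γ i)
    (hne : ∃ i : Fin (m + 1), 1 ≤ i.val ∧ Nonempty (γ i))
    {α β : Type} [Fintype α] [Fintype β] (f : α → α) (f' : β → β)
    (h : UnrollIso (polyEval g f) (polyEval g f')) :
    UnrollIso f f' := by
  obtain ⟨i0, hi0, hne0⟩ := hne
  have hH : ∀ t, hCount (polyEval g f) t = hCount (polyEval g f') t :=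
    fun t => hCount_eq_of_unrollIso h t
  have hForm : ∀ t, (∑ i : Fin (m+1), hCount (g i) t * (hCount f t) ^ i.val)
      = ∑ i : Fin (m+1), hCount (g i) t * (hCount f' t) ^ i.val := by
    intro t
    rw [← hCount_polyEval, ← hCount_polyEval]
    exact hH t
  have hz : ∀ t, hCount f t = hCount f' t := by
    intro t
    exact nat_poly_inj (fun i => hCount (g i) t) i0 (hCount_pos hne0 t) (by omega) (hForm t)
  exact unrollIso_of_hCount hz
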